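/- Let c ∈ ℝ, c ≠ 0. Let C₁ be the real 3×3 matrix whose (2,1) entry is c and all other entries are 0, and let C₂ be the real 3×3 matrix whose (3,1) entry is c and all other entries are 0. Then there is no real symmetric positive definite 3×3 matrix S such that both S·C₁ and S·C₂ are symmetric. (Consequently, the linearized Navier–Stokes–Korteweg system in two space dimensions, whose third-order coefficient matrices are of this form with c = k̄ρ̄ > 0, is not symmetrizable in the sense of Friedrichs.) -/

import Mathlib

open Matrix

/-- For `c ≠ 0`, there is no real symmetric positive definite `3 × 3`
matrix `S` such that both `S * C₁` and `S * C₂` are symmetric, where `C₁` has `c` in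
position `(2,1)` and zeros elsewhere, and `C₂` has `c` in position `(3,1)` and zeros
elsewhere.  Consequently, the linearized two-dimensional Navier–Stokes–Korteweg system
is not symmetrizable in the sense of Friedrichs. -/
theorem NSK_not_Friedrichs_symmetrizable (c : ℝ) (hc : c ≠ 0) :
    ¬ ∃ S : Matrix (Fin 3) (Fin 3) ℝ, S.PosDef ∧
      (S * !![0, 0, 0; c, 0, 0; 0, 0, 0]).IsSymm ∧
      (S * !![0, 0, 0; 0, 0, 0; c, 0, 0]).IsSymm := by
  rintro ⟨S, hS, h1, -⟩
  have key := congrFun (congrFun h1 0) 1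
  simp [Matrix.transpose_apply, Matrix.mul_apply, Fin.sum_univ_three] at key
  -- key : S 1 1 * c = 0 (roughly)
  have hdiag : 0 < S 1 1 := by
    have := hS.dotProduct_mulVec_pos (x := Pi.single 1 1) (by simp [Function.ne_iff])
    simpa [Matrix.mulVec_single, dotProduct, Fin.sum_univ_three] using this
  rcases key with k | k
  · exact hdiag.ne' k
  · exact hc k
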